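/- Let R be a commutative Noetherian ring graded by ℕ (or ℤ), let M be a graded R-module, and let X be any subset of Ass_R(M). Then there exists a graded submodule N of M (i.e. a submodule containing all homogeneous components of each of its elements) such that Ass_R(M/N) = X and Ass_R(N) = Ass_R(M) \ X. -/

import Mathlib

section AssChar

variable {R : Type u} [CommRing R] [IsNoetherianRing R]

private lemma ass_iff {M' : Type u} [AddCommGroup M'] [Module R M'] (p : Ideal R) :
    p ∈ associatedPrimes R M' ↔ p.IsPrime ∧ ∃ y : M', ∀ r : R, r ∈ p ↔ r • y = 0 := by
  rw [AssociatedPrimes.mem_iff, isAssociatedPrime_iff]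
  constructor
  · rintro ⟨h1, y, h2⟩
    refine ⟨h1, y, fun r => ?_⟩
    rw [h2, Submodule.mem_colon_singleton, Submodule.mem_bot]
  · rintro ⟨h1, y, h2⟩
    refine ⟨h1, y, ?_⟩
    ext r
    rw [Submodule.mem_colon_singleton, Submodule.mem_bot]
    exact h2 r

variable {M : Type u} [AddCommGroup M] [Module R M]

private lemma assN_iff (N : Submodule R M) (p : Ideal R) :
    p ∈ associatedPrimes R N ↔ p.IsPrime ∧ ∃ y ∈ N, ∀ r : R, r ∈ p ↔ r • y = 0 := by
  rw [ass_iff]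
  constructor
  · rintro ⟨h1, ⟨y, hy⟩, h2⟩
    refine ⟨h1, y, hy, fun r => (h2 r).trans ?_⟩
    rw [← Subtype.coe_inj]
    simp
  · rintro ⟨h1, y, hy, h2⟩
    refine ⟨h1, ⟨y, hy⟩, fun r => (h2 r).trans ?_⟩
    rw [← Subtype.coe_inj]
    simp

private lemma assQ_iff (N : Submodule R M) (p : Ideal R) :
    p ∈ associatedPrimes R (M ⧸ N) ↔ p.IsPrime ∧ ∃ y : M, ∀ r : R, r ∈ p ↔ r • y ∈ N := by
  rw [ass_iff]
  constructor
  · rintro ⟨h1, y, h2⟩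
    obtain ⟨x, rfl⟩ := Submodule.Quotient.mk_surjective N y
    refine ⟨h1, x, fun r => (h2 r).trans ?_⟩
    rw [← Submodule.Quotient.mk_smul, Submodule.Quotient.mk_eq_zero]
  · rintro ⟨h1, y, h2⟩
    refine ⟨h1, Submodule.Quotient.mk y, fun r => (h2 r).trans ?_⟩
    rw [← Submodule.Quotient.mk_smul, Submodule.Quotient.mk_eq_zero]

private lemma splitAss (N : Submodule R M) (p : Ideal R) (hp : p.IsPrime) (y : M)
    (hy : ∀ r : R, r ∈ p ↔ r • y = 0) :
    (∃ z ∈ N, ∀ r : R, r ∈ p ↔ r • z = 0) ∨ (∀ r : R, r ∈ p ↔ r • y ∈ N) := by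
  by_cases h : ∃ s : R, s • y ∈ N ∧ s • y ≠ 0
  · obtain ⟨s, hsN, hs0⟩ := h
    have hs : s ∉ p := fun hs => hs0 ((hy s).mp hs)
    refine Or.inl ⟨s • y, hsN, fun r => ⟨fun hr => ?_, fun hr => ?_⟩⟩
    · rw [smul_smul, mul_comm, mul_smul, (hy r).mp hr, smul_zero]
    · rw [smul_smul] at hr
      have := (hy (r * s)).mpr hr
      rcases hp.mem_or_mem this with h | h
      · exact h
      · exact absurd h hs
  · push_neg at h
    refine Or.inr fun r => ⟨fun hr => ?_, fun hr => ?_⟩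
    · rw [(hy r).mp hr]; exact N.zero_mem
    · exact (hy r).mpr (h r hr)

end AssChar

universe u

open DirectSum

section Grading

variable {R M : Type u} [CommRing R] [AddCommGroup M] [Module R M]
  (𝒜 : ℕ → AddSubgroup R) [GradedRing 𝒜]
  (ℳ : ℤ → AddSubgroup M) [DirectSum.Decomposition ℳ]

/-- The degree-`l` component, as an additive hom. -/
private noncomputable def cpt (l : ℤ) : M →+ M where
  toFun m := (decompose ℳ m l : M)
  map_zero' := by simp
  map_add' x y := by show ((decompose ℳ (x+y)) l : M) = _; rw [decompose_add]; simp

private lemma cpt_apply (l : ℤ) (m : M) : cpt ℳ l m = (decompose ℳ m l : M) := rfl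

private lemma D1
    (hsmul : ∀ (i : ℕ) (j : ℤ) (r : R) (m : M),
      r ∈ 𝒜 i → m ∈ ℳ j → r • m ∈ ℳ ((i : ℤ) + j))
    (j : ℕ) (b : R) (hb : b ∈ 𝒜 j) :
    ∀ (m : M) (i : ℤ),
      (decompose ℳ (b • m) ((j : ℤ) + i) : M) = b • (decompose ℳ m i : M) := by
  refine DirectSum.Decomposition.inductionOn ℳ ?_ ?_ ?_
  · intro i; simp
  · intro k mk i
    have h1 : (mk : M) ∈ ℳ k := mk.2
    have h2 : b • (mk : M) ∈ ℳ ((j : ℤ) + k) := hsmul j k b _ hb h1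
    rw [decompose_of_mem ℳ h2, decompose_of_mem ℳ h1, DirectSum.coe_of_apply,
      DirectSum.coe_of_apply]
    by_cases h : k = i
    · subst h; rw [if_pos rfl, if_pos rfl]
    · rw [if_neg (by omega), if_neg h]; simp
  · intro m m' hm hm' i
    rw [smul_add, ← cpt_apply, ← cpt_apply, map_add, map_add, cpt_apply, cpt_apply,
      cpt_apply, cpt_apply, hm i, hm' i, smul_add]

private lemma D1'
    (hsmul : ∀ (i : ℕ) (j : ℤ) (r : R) (m : M),
      r ∈ 𝒜 i → m ∈ ℳ j → r • m ∈ ℳ ((i : ℤ) + j))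
    (j : ℕ) (b : R) (hb : b ∈ 𝒜 j) (m : M) (l : ℤ) :
    (decompose ℳ (b • m) l : M) = b • (decompose ℳ m (l - (j : ℤ)) : M) := by
  have e : (j : ℤ) + (l - (j : ℤ)) = l := by ring
  have := D1 𝒜 ℳ hsmul j b hb m (l - (j : ℤ))
  rwa [e] at this

end Grading

open scoped Classical

section Grading2

set_option linter.unusedSectionVars false

variable {R M : Type u} [CommRing R] [AddCommGroup M] [Module R M]
  (𝒜 : ℕ → AddSubgroup R) [GradedRing 𝒜]
  (ℳ : ℤ → AddSubgroup M) [DirectSum.Decomposition ℳ]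

/-- The set of degrees where `x` has a component not lying in `N`. -/
private noncomputable def Fset (N : Submodule R M) (x : M) : Finset ℤ :=
  (decompose ℳ x).support.filter (fun i => (decompose ℳ x i : M) ∉ N)

private lemma mem_Fset {N : Submodule R M} {x : M} {i : ℤ} :
    i ∈ Fset ℳ N x ↔ i ∈ (decompose ℳ x).support ∧ (decompose ℳ x i : M) ∉ N := by
  classical
  simp [Fset]

private lemma memN_of_card_eq_zero {N : Submodule R M} {x : M}
    (h : (Fset ℳ N x).card = 0) : x ∈ N := by
  rw [Finset.card_eq_zero] at h
  rw [← DirectSum.sum_support_decompose ℳ x]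
  refine Submodule.sum_mem _ fun i hi => ?_
  by_contra hc
  have : i ∈ Fset ℳ N x := (mem_Fset ℳ).mpr ⟨hi, hc⟩
  simp [h] at this

private lemma claimC
    (hsmul : ∀ (i : ℕ) (j : ℤ) (r : R) (m : M),
      r ∈ 𝒜 i → m ∈ ℳ j → r • m ∈ ℳ ((i : ℤ) + j))
    (N : Submodule R M) (hN : ∀ m ∈ N, ∀ i : ℤ, (decompose ℳ m i : M) ∈ N)
    (j0 : ℕ) (a : R) (hmin : ∀ j ∈ (decompose 𝒜 a).support, j0 ≤ j) :
    ∀ n : ℕ, ∀ x : M, (Fset ℳ N x).card ≤ n → a • x ∈ N →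
      ∃ k : ℕ, ((decompose 𝒜 a j0 : R)) ^ k • x ∈ N := by
  intro n
  induction n with
  | zero =>
    intro x hcard hax
    exact ⟨0, by rw [pow_zero, one_smul]; exact memN_of_card_eq_zero ℳ (Nat.le_zero.mp hcard)⟩
  | succ n ih =>
    intro x hcard hax
    by_cases h0 : (Fset ℳ N x).card = 0
    · exact ⟨0, by rw [pow_zero, one_smul]; exact memN_of_card_eq_zero ℳ h0⟩
    have hnemp : (Fset ℳ N x).Nonempty := Finset.card_pos.mp (Nat.pos_of_ne_zero h0)
    set b : R := ((decompose 𝒜 a j0 : 𝒜 j0) : R) with hbdef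
    have hb : b ∈ 𝒜 j0 := (decompose 𝒜 a j0).2
    set i0 : ℤ := (Fset ℳ N x).min' hnemp with hi0
    have hi0mem : i0 ∈ Fset ℳ N x := (Fset ℳ N x).min'_mem hnemp
    have hlow : ∀ i : ℤ, i < i0 → (decompose ℳ x i : M) ∈ N := by
      intro i hi
      by_contra hc
      have hsupp : i ∈ (decompose ℳ x).support := by
        rw [DFinsupp.mem_support_iff]
        intro hz
        apply hc; rw [hz]; exact N.zero_mem
      have hmem : i ∈ Fset ℳ N x := (mem_Fset ℳ).mpr ⟨hsupp, hc⟩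
      exact absurd ((Fset ℳ N x).min'_le i hmem) (not_le.mpr hi)
    have hdecsum : ∀ l : ℤ, (decompose ℳ (a • x) l : M)
        = ∑ j ∈ (decompose 𝒜 a).support,
            ((decompose 𝒜 a j : 𝒜 j) : R) • (decompose ℳ x (l - (j : ℤ)) : M) := by
      intro l
      have hax' : a • x = ∑ j ∈ (decompose 𝒜 a).support,
          ((decompose 𝒜 a j : 𝒜 j) : R) • x := by
        conv_lhs => rw [← DirectSum.sum_support_decompose 𝒜 a]
        rw [Finset.sum_smul]
      rw [hax', ← cpt_apply, map_sum]
      refine Finset.sum_congr rfl fun j hj => ?_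
      rw [cpt_apply, D1' 𝒜 ℳ hsmul j _ (decompose 𝒜 a j).2]
    by_cases hj0 : j0 ∈ (decompose 𝒜 a).support
    case neg =>
      have hb0 : b = 0 := by
        rw [DFinsupp.notMem_support_iff] at hj0
        rw [hbdef, hj0]; rfl
      exact ⟨1, by rw [hb0, pow_one, zero_smul]; exact N.zero_mem⟩
    case pos =>
    have hstepi : b • (decompose ℳ x i0 : M) ∈ N := by
      have h1 : (decompose ℳ (a • x) ((j0 : ℤ) + i0) : M) ∈ N := hN _ hax _
      rw [hdecsum] at h1
      rw [← Finset.add_sum_erase _ _ hj0] at h1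
      have e0 : (j0 : ℤ) + i0 - (j0 : ℤ) = i0 := by ring
      rw [e0] at h1
      have hrest : ∑ j ∈ (decompose 𝒜 a).support.erase j0,
          ((decompose 𝒜 a j : 𝒜 j) : R) • (decompose ℳ x ((j0 : ℤ) + i0 - (j : ℤ)) : M) ∈ N := by
        refine Submodule.sum_mem _ fun j hj => ?_
        have hj' := Finset.mem_of_mem_erase hj
        have hjne := Finset.ne_of_mem_erase hj
        have hlt : (j0 : ℤ) + i0 - (j : ℤ) < i0 := by
          have h2 := hmin j hj'
          have h3 : j0 < j := lt_of_le_of_ne h2 (Ne.symm hjne)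
          omega
        exact N.smul_mem _ (hlow _ hlt)
      simpa using N.sub_mem h1 hrest
    have hsub : Fset ℳ N (b • x) ⊆ (Fset ℳ N x \ {i0}).image (fun i => (j0 : ℤ) + i) := by
      intro l hl
      obtain ⟨hls, hln⟩ := (mem_Fset ℳ).mp hl
      rw [D1' 𝒜 ℳ hsmul j0 b hb x l] at hln
      have hxn : (decompose ℳ x (l - (j0 : ℤ)) : M) ∉ N := fun h => hln (N.smul_mem _ h)
      have hsupp : (l - (j0 : ℤ)) ∈ (decompose ℳ x).support := by
        rw [DFinsupp.mem_support_iff]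
        intro hz; apply hxn; rw [hz]; exact N.zero_mem
      have hne2 : l - (j0 : ℤ) ≠ i0 := by
        intro h; rw [h] at hln; exact hln hstepi
      exact Finset.mem_image.mpr ⟨l - (j0 : ℤ),
        Finset.mem_sdiff.mpr ⟨(mem_Fset ℳ).mpr ⟨hsupp, hxn⟩, by simp [hne2]⟩, by ring⟩
    have hcard' : (Fset ℳ N (b • x)).card ≤ n := by
      have c1 : (Fset ℳ N (b • x)).card ≤ ((Fset ℳ N x \ {i0}).image (fun i => (j0 : ℤ) + i)).card :=
        Finset.card_le_card hsub
      have c2 : ((Fset ℳ N x \ {i0}).image (fun i => (j0 : ℤ) + i)).card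
          ≤ (Fset ℳ N x \ {i0}).card := Finset.card_image_le
      have c3 : (Fset ℳ N x \ {i0}).card = (Fset ℳ N x).card - 1 := by
        rw [Finset.sdiff_singleton_eq_erase, Finset.card_erase_of_mem hi0mem]
      omega
    obtain ⟨k, hk⟩ := ih (b • x) hcard' (by
      rw [smul_smul, mul_comm, ← smul_smul]
      exact N.smul_mem _ hax)
    refine ⟨k + 1, ?_⟩
    rw [pow_succ, mul_smul]
    exact hk

end Grading2

section Grading3

set_option linter.unusedSectionVars false

variable {R M : Type u} [CommRing R] [AddCommGroup M] [Module R M]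
  (𝒜 : ℕ → AddSubgroup R) [GradedRing 𝒜]
  (ℳ : ℤ → AddSubgroup M) [DirectSum.Decomposition ℳ]

private lemma step1
    (hsmul : ∀ (i : ℕ) (j : ℤ) (r : R) (m : M),
      r ∈ 𝒜 i → m ∈ ℳ j → r • m ∈ ℳ ((i : ℤ) + j))
    (N : Submodule R M) (hN : ∀ m ∈ N, ∀ i : ℤ, (decompose ℳ m i : M) ∈ N)
    (p : Ideal R) (hp : p.IsPrime) (x : M) (hx : ∀ r : R, r ∈ p ↔ r • x ∈ N) :
    ∀ a ∈ p, ∀ j : ℕ, ((decompose 𝒜 a j : 𝒜 j) : R) ∈ p := by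
  suffices H : ∀ n : ℕ, ∀ a : R, (decompose 𝒜 a).support.card ≤ n → a ∈ p →
      ∀ j : ℕ, ((decompose 𝒜 a j : 𝒜 j) : R) ∈ p by
    exact fun a ha j => H _ a le_rfl ha j
  intro n
  induction n with
  | zero =>
    intro a hc ha j
    rw [Nat.le_zero, Finset.card_eq_zero] at hc
    have ha0 : a = 0 := by
      conv_lhs => rw [← DirectSum.sum_support_decompose 𝒜 a]
      rw [hc, Finset.sum_empty]
    subst ha0
    rw [decompose_zero]
    simpa using p.zero_mem
  | succ n ih =>
    intro a hc ha j
    by_cases hz : (decompose 𝒜 a).support = ∅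
    · have ha0 : a = 0 := by
        conv_lhs => rw [← DirectSum.sum_support_decompose 𝒜 a]
        rw [hz, Finset.sum_empty]
      subst ha0
      rw [decompose_zero]
      simpa using p.zero_mem
    have hnemp : (decompose 𝒜 a).support.Nonempty := Finset.nonempty_iff_ne_empty.mpr hz
    set j0 : ℕ := (decompose 𝒜 a).support.min' hnemp with hj0def
    have hj0mem : j0 ∈ (decompose 𝒜 a).support := Finset.min'_mem _ _
    set b : R := ((decompose 𝒜 a j0 : 𝒜 j0) : R) with hbdef
    have hbA : b ∈ 𝒜 j0 := (decompose 𝒜 a j0).2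
    have hbp : b ∈ p := by
      obtain ⟨k, hk⟩ := claimC 𝒜 ℳ hsmul N hN j0 a
        (fun j hj => Finset.min'_le _ _ hj) (Fset ℳ N x).card x le_rfl ((hx a).mp ha)
      exact hp.mem_of_pow_mem k ((hx _).mpr hk)
    have key : ∀ i : ℕ, i ≠ j0 → decompose 𝒜 (a - b) i = decompose 𝒜 a i := by
      intro i hi
      rw [decompose_sub, DirectSum.sub_apply, decompose_of_mem 𝒜 hbA,
        DirectSum.of_eq_of_ne _ _ _ hi, sub_zero]
    have keyj0 : decompose 𝒜 (a - b) j0 = 0 := by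
      rw [decompose_sub, DirectSum.sub_apply, decompose_of_mem 𝒜 hbA,
        DirectSum.of_eq_same, sub_eq_zero]
    have hsub : (decompose 𝒜 (a - b)).support ⊆ (decompose 𝒜 a).support.erase j0 := by
      intro i hi
      rw [DFinsupp.mem_support_iff] at hi
      rw [Finset.mem_erase, DFinsupp.mem_support_iff]
      have hne : i ≠ j0 := by rintro rfl; exact hi keyj0
      refine ⟨hne, ?_⟩
      rw [← key i hne]
      exact hi
    have hcard2 : (decompose 𝒜 (a - b)).support.card ≤ n := by
      have h1 := Finset.card_le_card hsub
      rw [Finset.card_erase_of_mem hj0mem] at h1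
      have h2 : 0 < (decompose 𝒜 a).support.card := Finset.card_pos.mpr hnemp
      omega
    have hall := ih (a - b) hcard2 (Ideal.sub_mem p ha hbp)
    by_cases hjj : j = j0
    · subst hjj
      rw [← hbdef]
      exact hbp
    · have h3 := hall j
      rw [key j hjj] at h3
      exact h3

private lemma lemmaA
    (hsmul : ∀ (i : ℕ) (j : ℤ) (r : R) (m : M),
      r ∈ 𝒜 i → m ∈ ℳ j → r • m ∈ ℳ ((i : ℤ) + j))
    (N : Submodule R M) (hN : ∀ m ∈ N, ∀ i : ℤ, (decompose ℳ m i : M) ∈ N)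
    (p : Ideal R) (hp : p.IsPrime) (x : M) (hx : ∀ r : R, r ∈ p ↔ r • x ∈ N) :
    ∃ (i : ℤ) (y : M), y ∈ ℳ i ∧ ∀ r : R, r ∈ p ↔ r • y ∈ N := by
  -- the colon ideals of the components
  set I : ℤ → Ideal R := fun i => N.colon (Submodule.span R {((decompose ℳ x i : ℳ i) : M)})
    with hIdef
  have hmemI : ∀ (i : ℤ) (r : R), r ∈ I i ↔ r • (decompose ℳ x i : M) ∈ N := by
    intro i r
    rw [hIdef]
    exact Submodule.mem_colon_span_singleton
  -- step 3 : p ≤ I i for all i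
  have hstep3 : ∀ i : ℤ, p ≤ I i := by
    intro i r hr
    rw [hmemI]
    have hrx : r • x = ∑ j ∈ (decompose 𝒜 r).support, ((decompose 𝒜 r j : 𝒜 j) : R) • x := by
      conv_lhs => rw [← DirectSum.sum_support_decompose 𝒜 r]
      rw [Finset.sum_smul]
    have hcomp : ∀ j : ℕ, ((decompose 𝒜 r j : 𝒜 j) : R) • (decompose ℳ x i : M) ∈ N := by
      intro j
      have hjp : ((decompose 𝒜 r j : 𝒜 j) : R) ∈ p := step1 𝒜 ℳ hsmul N hN p hp x hx r hr j
      have hjx : ((decompose 𝒜 r j : 𝒜 j) : R) • x ∈ N := (hx _).mp hjp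
      have := hN _ hjx ((j : ℤ) + i)
      rwa [D1 𝒜 ℳ hsmul j _ (decompose 𝒜 r j).2 x i] at this
    have heq : r • (decompose ℳ x i : M)
        = ∑ j ∈ (decompose 𝒜 r).support, ((decompose 𝒜 r j : 𝒜 j) : R) • (decompose ℳ x i : M) := by
      conv_lhs => rw [← DirectSum.sum_support_decompose 𝒜 r]
      rw [Finset.sum_smul]
    rw [heq]
    exact Submodule.sum_mem _ fun j _ => hcomp j
  -- step 4 : the product of the I i over the support of x is contained in p
  have hstep4 : ∏ i ∈ (decompose ℳ x).support, I i ≤ p := by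
    intro r hr
    rw [hx]
    have hri : ∀ i ∈ (decompose ℳ x).support, r ∈ I i := by
      intro i hi
      exact (Finset.inf_le hi : (decompose ℳ x).support.inf I ≤ I i)
        (Ideal.prod_le_inf hr)
    have heq : r • x = ∑ i ∈ (decompose ℳ x).support, r • (decompose ℳ x i : M) := by
      conv_lhs => rw [← DirectSum.sum_support_decompose ℳ x]
      rw [Finset.smul_sum]
    rw [heq]
    exact Submodule.sum_mem _ fun i hi => (hmemI i r).mp (hri i hi)
  obtain ⟨i, hi, hIle⟩ := (hp.prod_le).mp hstep4
  refine ⟨i, (decompose ℳ x i : M), (decompose ℳ x i).2, fun r => ?_⟩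
  rw [← hmemI]
  exact ⟨fun hr => hstep3 i hr, fun hr => hIle hr⟩

private lemma grd_sup {N N' : Submodule R M}
    (hN : ∀ m ∈ N, ∀ i : ℤ, (decompose ℳ m i : M) ∈ N)
    (hN' : ∀ m ∈ N', ∀ i : ℤ, (decompose ℳ m i : M) ∈ N') :
    ∀ m ∈ N ⊔ N', ∀ i : ℤ, (decompose ℳ m i : M) ∈ N ⊔ N' := by
  intro m hm i
  obtain ⟨y, hy, z, hz, rfl⟩ := Submodule.mem_sup.mp hm
  rw [decompose_add]
  rw [DirectSum.add_apply]
  push_cast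
  exact Submodule.add_mem _ (Submodule.mem_sup_left (hN y hy i))
    (Submodule.mem_sup_right (hN' z hz i))

private lemma grd_span_homog
    (hsmul : ∀ (i : ℕ) (j : ℤ) (r : R) (m : M),
      r ∈ 𝒜 i → m ∈ ℳ j → r • m ∈ ℳ ((i : ℤ) + j))
    {d : ℤ} {y : M} (hy : y ∈ ℳ d) :
    ∀ m ∈ Submodule.span R {y}, ∀ i : ℤ, (decompose ℳ m i : M) ∈ Submodule.span R {y} := by
  intro m hm l
  obtain ⟨r, rfl⟩ := Submodule.mem_span_singleton.mp hm
  have hry : r • y = ∑ j ∈ (decompose 𝒜 r).support, ((decompose 𝒜 r j : 𝒜 j) : R) • y := by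
    conv_lhs => rw [← DirectSum.sum_support_decompose 𝒜 r]
    rw [Finset.sum_smul]
  rw [hry, ← cpt_apply, map_sum]
  refine Submodule.sum_mem _ fun j _ => ?_
  rw [cpt_apply, D1' 𝒜 ℳ hsmul j _ (decompose 𝒜 r j).2]
  by_cases h : d = l - (j : ℤ)
  · rw [decompose_of_mem_same ℳ (h ▸ hy)]
    exact Submodule.smul_mem _ _ (Submodule.mem_span_singleton_self y)
  · rw [decompose_of_mem_ne ℳ hy h, smul_zero]
    exact Submodule.zero_mem _

end Grading3



/-- For a graded module `M` over a Noetherian graded commutative ring `R` and any subset `X` of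
`Ass_R(M)`, there is a graded submodule `N` of `M` with `Ass_R(M/N) = X` and
`Ass_R(N) = Ass_R(M) \ X`. -/
theorem stmt15 {R M : Type u} [CommRing R] [IsNoetherianRing R]
    (𝒜 : ℕ → AddSubgroup R) [GradedRing 𝒜]
    [AddCommGroup M] [Module R M]
    -- `M` is a `ℤ`-graded `R`-module:
    (ℳ : ℤ → AddSubgroup M) [DirectSum.Decomposition ℳ]
    (hsmul : ∀ (i : ℕ) (j : ℤ) (r : R) (m : M),
      r ∈ 𝒜 i → m ∈ ℳ j → r • m ∈ ℳ ((i : ℤ) + j))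
    (X : Set (Ideal R)) (hX : X ⊆ associatedPrimes R M) :
    ∃ N : Submodule R M,
      -- `N` is a graded submodule:
      (∀ m ∈ N, ∀ i : ℤ, ((DirectSum.decompose ℳ m i : ℳ i) : M) ∈ N) ∧
      associatedPrimes R (M ⧸ N) = X ∧
      associatedPrimes R N = associatedPrimes R M \ X := by
  classical
  set A := associatedPrimes R M with hA
  set S : Set (Submodule R M) :=
    {N | (∀ m ∈ N, ∀ i : ℤ, ((decompose ℳ m i : ℳ i) : M) ∈ N) ∧
      associatedPrimes R N ⊆ A \ X} with hS
  have hbot : (⊥ : Submodule R M) ∈ S := by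
    constructor
    · intro m hm i
      rw [Submodule.mem_bot] at hm; subst hm
      rw [decompose_zero]; simp
    · intro p hp
      rw [assN_iff] at hp
      obtain ⟨hpp, y, hy, hr⟩ := hp
      rw [Submodule.mem_bot] at hy; subst hy
      exact absurd (Ideal.eq_top_iff_one p |>.mpr ((hr 1).mpr (smul_zero 1))) hpp.ne_top
  have hchain : ∀ c ⊆ S, IsChain (· ≤ ·) c → ∀ y ∈ c, ∃ ub ∈ S, ∀ z ∈ c, z ≤ ub := by
    intro c hcS hc y hyc
    refine ⟨sSup c, ⟨?_, ?_⟩, fun z hz => le_sSup hz⟩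
    · intro m hm i
      obtain ⟨N', hN'c, hmN'⟩ := (Submodule.mem_sSup_of_directed ⟨y, hyc⟩ hc.directedOn).mp hm
      exact le_sSup hN'c ((hcS hN'c).1 m hmN' i)
    · intro p hp
      rw [assN_iff] at hp
      obtain ⟨hpp, z, hz, hr⟩ := hp
      obtain ⟨N', hN'c, hzN'⟩ := (Submodule.mem_sSup_of_directed ⟨y, hyc⟩ hc.directedOn).mp hz
      exact (hcS hN'c).2 ((assN_iff N' p).mpr ⟨hpp, z, hzN', hr⟩)
  obtain ⟨N, -, hNmax⟩ := zorn_le_nonempty₀ S hchain ⊥ hbot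
  have hNS : N ∈ S := hNmax.1
  have hGrd := hNS.1
  have hAssN : associatedPrimes R N ⊆ A \ X := hNS.2
  have hQX : associatedPrimes R (M ⧸ N) ⊆ X := by
    intro p hp
    rw [assQ_iff] at hp
    obtain ⟨hpp, x, hxp⟩ := hp
    by_contra hpX
    obtain ⟨i, y, hyi, hy⟩ := lemmaA 𝒜 ℳ hsmul N hGrd p hpp x hxp
    have hyN : y ∉ N := by
      intro h
      exact hpp.ne_top (Ideal.eq_top_iff_one p |>.mpr ((hy 1).mpr (by rwa [one_smul])))
    set N' := N ⊔ Submodule.span R {y} with hN'def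
    have hyN' : y ∈ N' := Submodule.mem_sup_right (Submodule.mem_span_singleton_self y)
    have hNN' : N < N' := lt_of_le_of_ne le_sup_left (fun h => hyN (h ▸ hyN'))
    have hN'S : N' ∈ S := by
      refine ⟨grd_sup ℳ hGrd (grd_span_homog 𝒜 ℳ hsmul hyi), ?_⟩
      intro q hq
      rw [assN_iff] at hq
      obtain ⟨hqq, z, hzN', hz⟩ := hq
      have hqA : q ∈ A := (ass_iff q).mpr ⟨hqq, z, hz⟩
      rcases splitAss N q hqq z hz with ⟨w, hwN, hw⟩ | h2
      · exact hAssN ((assN_iff N q).mpr ⟨hqq, w, hwN, hw⟩)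
      · have hzN : z ∉ N := by
          intro h
          exact hqq.ne_top (Ideal.eq_top_iff_one q |>.mpr ((h2 1).mpr (by rwa [one_smul])))
        obtain ⟨u, huN, w, hw', rfl⟩ := Submodule.mem_sup.mp hzN'
        obtain ⟨r, rfl⟩ := Submodule.mem_span_singleton.mp hw'
        have hrp : r ∉ p := by
          intro hr
          exact hzN (N.add_mem huN ((hy r).mp hr))
        have hqp : q = p := by
          ext t
          rw [h2 t]
          constructor
          · intro ht
            have h3 : t • (r • y) ∈ N := by
              have h4 := N.sub_mem ht (N.smul_mem t huN)
              simpa [smul_add] using h4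
            rw [smul_smul] at h3
            rcases hpp.mem_or_mem ((hy (t * r)).mpr h3) with h | h
            · exact h
            · exact absurd h hrp
          · intro ht
            have h3 : (t * r) • y ∈ N := (hy (t * r)).mp (Ideal.mul_mem_right r p ht)
            have h4 : t • (u + r • y) = t • u + (t * r) • y := by rw [smul_add, smul_smul]
            rw [h4]
            exact N.add_mem (N.smul_mem t huN) h3
        rw [hqp]
        exact ⟨hqp ▸ hqA, hpX⟩
    exact absurd (hNmax.2 hN'S hNN'.le) (not_le_of_gt hNN')
  have hXQ : X ⊆ associatedPrimes R (M ⧸ N) := by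
    intro p hpX
    have hpA : p ∈ A := hX hpX
    obtain ⟨hpp, x, hx⟩ := (ass_iff p).mp hpA
    rcases splitAss N p hpp x hx with ⟨z, hzN, hz⟩ | h2
    · exact absurd (hAssN ((assN_iff N p).mpr ⟨hpp, z, hzN, hz⟩)).2 (not_not_intro hpX)
    · exact (assQ_iff N p).mpr ⟨hpp, x, h2⟩
  have hNA : associatedPrimes R N = A \ X := by
    refine Set.Subset.antisymm hAssN fun p hp => ?_
    obtain ⟨hpA, hpX⟩ := hp
    obtain ⟨hpp, x, hx⟩ := (ass_iff p).mp hpA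
    rcases splitAss N p hpp x hx with ⟨z, hzN, hz⟩ | h2
    · exact (assN_iff N p).mpr ⟨hpp, z, hzN, hz⟩
    · exact absurd (hQX ((assQ_iff N p).mpr ⟨hpp, x, h2⟩)) hpX
  exact ⟨N, hGrd, Set.Subset.antisymm hQX hXQ, hNA⟩
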